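/- Let T be a tree, v a leaf of T with neighbor w, and k ≥ 1 the number of external influencers. Let T' = T - {v} with thresholds unchanged, and T'' = T - {v} with the threshold of w reduced by 1 (and all other thresholds unchanged). Then T has a pervading link set if and only if either (a) t(v) ≤ k and T'' has a pervading link set, or (b) t(v) = k+1 and T' has a pervading link set. -/

import Mathlib

open Finset
open scoped Classical

/-- Threshold activation process: `act G t s j` is the set of nodes active at step `j`,
given link vector `s` (partial incentives from external influencers). -/
noncomputable def act {V : Type*} [Fintype V] (G : SimpleGraph V) (t s : V → ℕ) :
    ℕ → Finset V
  | 0 => Finset.univ.filter (fun v => t v ≤ s v)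
  | (j+1) => act G t s j ∪ Finset.univ.filter
      (fun v => t v ≤ s v + ((act G t s j).filter (fun u => G.Adj u v)).card)

/-- A link vector `s` is pervading for `(G, t)` with `k` external influencers if each node
receives at most `k` links and the process eventually activates every node. -/
def Pervading {V : Type*} [Fintype V] (G : SimpleGraph V) (t s : V → ℕ) (k : ℕ) : Prop :=
  (∀ v, s v ≤ k) ∧ ∃ j, act G t s j = Finset.univ

section aux
variable {V : Type*} [Fintype V]

lemma act_le_succ (G : SimpleGraph V) (t s : V → ℕ) (j : ℕ) :
    act G t s j ⊆ act G t s (j+1) := by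
  rw [act]; exact Finset.subset_union_left

lemma act_mono (G : SimpleGraph V) (t s : V → ℕ) : Monotone (act G t s) :=
  monotone_nat_of_le_succ (act_le_succ G t s)

lemma mem_act_zero {G : SimpleGraph V} {t s : V → ℕ} {u : V} :
    u ∈ act G t s 0 ↔ t u ≤ s u := by
  rw [act]; simp

lemma mem_act_succ {G : SimpleGraph V} {t s : V → ℕ} {j : ℕ} {u : V} :
    u ∈ act G t s (j+1) ↔ u ∈ act G t s j ∨
      t u ≤ s u + ((act G t s j).filter (fun x => G.Adj x u)).card := by
  rw [act]; simp

lemma act_stab (G : SimpleGraph V) (t s : V → ℕ) :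
    ∃ N, act G t s (N+1) = act G t s N := by
  by_contra h
  push_neg at h
  have key : ∀ n, n ≤ (act G t s n).card := by
    intro n
    induction n with
    | zero => exact Nat.zero_le _
    | succ n ih =>
      have h1 : act G t s n ⊂ act G t s (n+1) :=
        (act_le_succ G t s n).ssubset_of_ne (Ne.symm (h n))
      have := Finset.card_lt_card h1
      omega
  have h2 := key (Fintype.card V + 1)
  have h3 := Finset.card_le_univ (act G t s (Fintype.card V + 1))
  omega

end aux

theorem tree_pervading_leaf_iff {V : Type*} [Fintype V] [DecidableEq V]
    (G : SimpleGraph V) (hT : G.IsTree) (t : V → ℕ) (k : ℕ) (hk : 1 ≤ k)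
    (ht : ∀ u, 1 ≤ t u)
    (v w : V) (hleaf : G.degree v = 1) (hadj : G.Adj v w) :
    (∃ s, Pervading G t s k) ↔
      ((t v ≤ k ∧ ∃ s, Pervading (G.comap (Subtype.val : {u : V // u ≠ v} → V))
          (fun u => if u.val = w then t w - 1 else t u.val) s k)
       ∨ (t v = k + 1 ∧ ∃ s, Pervading (G.comap (Subtype.val : {u : V // u ≠ v} → V))
          (fun u => t u.val) s k)) := by
  have hvw : v ≠ w := G.ne_of_adj hadj
  have hwv : G.Adj w v := hadj.symm
  set G' := G.comap (Subtype.val : {u : V // u ≠ v} → V) with hG'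
  set t2 : {u : V // u ≠ v} → ℕ := fun u => if u.val = w then t w - 1 else t u.val with ht2
  set t1 : {u : V // u ≠ v} → ℕ := fun u => t u.val with ht1
  set e : {u : V // u ≠ v} ↪ V := Function.Embedding.subtype (fun u => u ≠ v) with he
  have hnb : ∀ u, G.Adj u v → u = w := by
    intro u hu
    have hcard : (G.neighborFinset v).card = 1 := hleaf
    obtain ⟨a, ha⟩ := Finset.card_eq_one.mp hcard
    have hw' : w ∈ G.neighborFinset v := by
      rw [SimpleGraph.mem_neighborFinset]; exact hadj
    have hu' : u ∈ G.neighborFinset v := by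
      rw [SimpleGraph.mem_neighborFinset]; exact hu.symm
    rw [ha, Finset.mem_singleton] at hw' hu'
    rw [hu', hw']
  constructor
  · rintro ⟨s, hsk, J, hJ⟩
    set s1 : {u : V // u ≠ v} → ℕ := fun u => s u.val with hs1
    -- v can only ever see at most one active neighbor
    have hvle : ∀ j, v ∈ act G t s j → t v ≤ s v + 1 := by
      intro j
      induction j with
      | zero => intro h; rw [mem_act_zero] at h; omega
      | succ j ih =>
        intro h
        rw [mem_act_succ] at h
        rcases h with h | h
        · exact ih h
        · have hsub : (act G t s j).filter (fun x => G.Adj x v) ⊆ {w} := by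
            intro x hx
            rw [Finset.mem_filter] at hx
            rw [Finset.mem_singleton]
            exact hnb x hx.2
          have hc := Finset.card_le_card hsub
          rw [Finset.card_singleton] at hc
          omega
    have hvJ : v ∈ act G t s J := by rw [hJ]; exact Finset.mem_univ v
    have htv1 : t v ≤ k + 1 := le_trans (hvle J hvJ) (by have := hsk v; omega)
    by_cases htvk : t v ≤ k
    · left
      refine ⟨htvk, s1, fun u => hsk u.val, J, ?_⟩
      have claim : ∀ j, ∀ u : V, ∀ h : u ≠ v, u ∈ act G t s j →
          (⟨u, h⟩ : {u : V // u ≠ v}) ∈ act G' t2 s1 j := by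
        intro j
        induction j with
        | zero =>
          intro u h hu
          rw [mem_act_zero] at hu ⊢
          by_cases huw : u = w
          · show (if u = w then t w - 1 else t u) ≤ s u
            rw [if_pos huw]
            have htu : t u = t w := by rw [huw]
            omega
          · show (if u = w then t w - 1 else t u) ≤ s u
            rw [if_neg huw]
            exact hu
        | succ j ih =>
          intro u h hu
          rw [mem_act_succ] at hu ⊢
          rcases hu with hu | hu
          · exact Or.inl (ih u h hu)
          · right
            have hfeq : (act G' t2 s1 j).filter
                  (fun x => G'.Adj x (⟨u, h⟩ : {u : V // u ≠ v}))
                = (act G' t2 s1 j).filter (fun x => G.Adj x.val u) := by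
              apply Finset.filter_congr
              intro x _
              simp [hG', SimpleGraph.comap_adj]
            have hcard : ∀ inst, (@Finset.filter _ (fun x => G'.Adj x (⟨u, h⟩ : {u : V // u ≠ v})) inst (act G' t2 s1 j)).card = ((act G' t2 s1 j).filter (fun x => G.Adj x.val u)).card :=
              fun inst => by convert congrArg Finset.card hfeq
            rw [hcard]
            by_cases huw : u = w
            · have hsub : (act G t s j).filter (fun x => G.Adj x u) ⊆
                  insert v (((act G' t2 s1 j).filter (fun x => G.Adj x.val u)).map e) := by
                intro x hx
                rw [Finset.mem_filter] at hx
                by_cases hxv : x = v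
                · rw [hxv]; exact Finset.mem_insert_self _ _
                · refine Finset.mem_insert_of_mem ?_
                  rw [Finset.mem_map]
                  exact ⟨⟨x, hxv⟩, Finset.mem_filter.mpr ⟨ih x hxv hx.1, hx.2⟩, rfl⟩
              have hc1 := Finset.card_le_card hsub
              have hc2 := Finset.card_insert_le v
                (((act G' t2 s1 j).filter (fun x => G.Adj x.val u)).map e)
              rw [Finset.card_map] at hc2
              have hw1 := ht w
              have htu : t u = t w := by rw [huw]
              show (if u = w then t w - 1 else t u) ≤ s u + _
              rw [if_pos huw]
              omega
            · have hsub : (act G t s j).filter (fun x => G.Adj x u) ⊆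
                  ((act G' t2 s1 j).filter (fun x => G.Adj x.val u)).map e := by
                intro x hx
                rw [Finset.mem_filter] at hx
                have hxv : x ≠ v := by
                  intro hxv
                  exact huw (hnb u (hxv ▸ hx.2).symm)
                rw [Finset.mem_map]
                exact ⟨⟨x, hxv⟩, Finset.mem_filter.mpr ⟨ih x hxv hx.1, hx.2⟩, rfl⟩
              have hc1 := Finset.card_le_card hsub
              rw [Finset.card_map] at hc1
              show (if u = w then t w - 1 else t u) ≤ s u + _
              rw [if_neg huw]
              omega
      apply Finset.eq_univ_iff_forall.mpr
      rintro ⟨x, hx⟩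
      exact claim J x hx (by rw [hJ]; exact Finset.mem_univ x)
    · right
      have htveq : t v = k + 1 := by omega
      refine ⟨htveq, s1, fun u => hsk u.val, ?_⟩
      have hwv_act : ∀ j, v ∈ act G t s j → w ∈ act G t s j := by
        intro j
        induction j with
        | zero =>
          intro hv; rw [mem_act_zero] at hv
          have := hsk v; omega
        | succ j ih =>
          intro hv
          rw [mem_act_succ] at hv
          rcases hv with hv | hv
          · exact act_le_succ G t s j (ih hv)
          · have hpos : 0 < ((act G t s j).filter (fun x => G.Adj x v)).card := by
              have := hsk v; omega
            obtain ⟨x, hx⟩ := Finset.card_pos.mp hpos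
            rw [Finset.mem_filter] at hx
            have hxw : x = w := hnb x hx.2
            exact act_le_succ G t s j (hxw ▸ hx.1)
      obtain ⟨N, hN⟩ := act_stab G' t1 s1
      have claim : ∀ j, ∀ u : V, ∀ h : u ≠ v, u ∈ act G t s j →
          (⟨u, h⟩ : {u : V // u ≠ v}) ∈ act G' t1 s1 N := by
        intro j
        induction j with
        | zero =>
          intro u h hu
          rw [mem_act_zero] at hu
          exact act_mono G' t1 s1 (Nat.zero_le N) (mem_act_zero.mpr hu)
        | succ j ih =>
          intro u h hu
          rw [mem_act_succ] at hu
          rcases hu with hu | hu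
          · exact ih u h hu
          · by_cases hu' : u ∈ act G t s j
            · exact ih u h hu'
            · have hxv : ∀ x ∈ (act G t s j).filter (fun x => G.Adj x u), x ≠ v := by
                intro x hx hxv
                rw [Finset.mem_filter] at hx
                by_cases huw : u = w
                · subst huw
                  exact hu' (hwv_act j (hxv ▸ hx.1))
                · exact huw (hnb u (hxv ▸ hx.2).symm)
              have hsub : (act G t s j).filter (fun x => G.Adj x u) ⊆
                  ((act G' t1 s1 N).filter (fun x => G.Adj x.val u)).map e := by
                intro x hx
                have hx' := Finset.mem_filter.mp hx
                rw [Finset.mem_map]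
                exact ⟨⟨x, hxv x hx⟩, Finset.mem_filter.mpr ⟨ih x (hxv x hx) hx'.1, hx'.2⟩, rfl⟩
              have hc1 := Finset.card_le_card hsub
              rw [Finset.card_map] at hc1
              have hmem : (⟨u, h⟩ : {u : V // u ≠ v}) ∈ act G' t1 s1 (N+1) := by
                rw [mem_act_succ]
                right
                have hfeq : (act G' t1 s1 N).filter
                      (fun x => G'.Adj x (⟨u, h⟩ : {u : V // u ≠ v}))
                    = (act G' t1 s1 N).filter (fun x => G.Adj x.val u) := by
                  apply Finset.filter_congr
                  intro x _
                  simp [hG', SimpleGraph.comap_adj]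
                have hcard : ∀ inst, (@Finset.filter _ (fun x => G'.Adj x (⟨u, h⟩ : {u : V // u ≠ v})) inst (act G' t1 s1 N)).card = ((act G' t1 s1 N).filter (fun x => G.Adj x.val u)).card :=
                  fun inst => by convert congrArg Finset.card hfeq
                rw [hcard]
                show t u ≤ s u + _
                omega
              rwa [hN] at hmem
      refine ⟨N, ?_⟩
      apply Finset.eq_univ_iff_forall.mpr
      rintro ⟨x, hx⟩
      exact claim J x hx (by rw [hJ]; exact Finset.mem_univ x)
  · rintro (⟨htvk, s2, hs2k, J, hJ⟩ | ⟨htveq, s2, hs2k, J, hJ⟩)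
    · -- case (a): t v ≤ k, T'' pervading
      set s : V → ℕ := fun u => if h : u = v then t v else s2 ⟨u, h⟩ with hs
      have hsv : s v = t v := by rw [hs]; simp
      have hsu : ∀ (u : {u : V // u ≠ v}), s u.val = s2 u := by
        rintro ⟨u, hu⟩
        rw [hs]
        simp [hu]
      have hv0 : v ∈ act G t s 0 := by
        rw [mem_act_zero, hsv]
      have claim : ∀ j, ∀ u : {u : V // u ≠ v}, u ∈ act G' t2 s2 j →
          u.val ∈ act G t s (j+1) := by
        intro j
        induction j with
        | zero =>
          intro u hu
          rw [mem_act_zero] at hu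
          by_cases huw : u.val = w
          · rw [mem_act_succ]
            right
            have hvmem : v ∈ (act G t s 0).filter (fun x => G.Adj x u.val) := by
              rw [Finset.mem_filter]
              exact ⟨hv0, huw ▸ hadj⟩
            have hpos : 0 < ((act G t s 0).filter (fun x => G.Adj x u.val)).card :=
              Finset.card_pos.mpr ⟨v, hvmem⟩
            have ht2u : t2 u = t w - 1 := by rw [ht2]; simp [huw]
            rw [ht2u] at hu
            have hw1 := ht w
            have hss := hsu u
            have htu : t u.val = t w := by rw [huw]
            omega
          · apply act_le_succ
            rw [mem_act_zero, hsu u]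
            have ht2u : t2 u = t u.val := by rw [ht2]; simp [huw]
            rw [ht2u] at hu
            exact hu
        | succ j ih =>
          intro u hu
          rw [mem_act_succ] at hu
          rcases hu with hu | hu
          · exact act_le_succ G t s (j+1) (ih u hu)
          · rw [mem_act_succ]
            right
            have hfeq : (act G' t2 s2 j).filter (fun x => G'.Adj x u)
                = (act G' t2 s2 j).filter (fun x => G.Adj x.val u.val) := by
              apply Finset.filter_congr
              intro x _
              simp [hG', SimpleGraph.comap_adj]
            have hcard : ∀ inst, (@Finset.filter _ (fun x => G'.Adj x u) inst (act G' t2 s2 j)).card = ((act G' t2 s2 j).filter (fun x => G.Adj x.val u.val)).card :=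
              fun inst => by convert congrArg Finset.card hfeq
            rw [hcard] at hu
            have hsub : ((act G' t2 s2 j).filter (fun x => G.Adj x.val u.val)).map e ⊆
                (act G t s (j+1)).filter (fun x => G.Adj x u.val) := by
              intro x hx
              rw [Finset.mem_map] at hx
              obtain ⟨y, hy, hyx⟩ := hx
              rw [Finset.mem_filter] at hy
              rw [Finset.mem_filter]
              have : e y = y.val := rfl
              rw [← hyx, this]
              exact ⟨ih y hy.1, hy.2⟩
            by_cases huw : u.val = w
            · have hvnm : v ∉ ((act G' t2 s2 j).filter (fun x => G.Adj x.val u.val)).map e := by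
                rw [Finset.mem_map]
                rintro ⟨y, _, hyx⟩
                exact y.prop hyx
              have hins : insert v (((act G' t2 s2 j).filter (fun x => G.Adj x.val u.val)).map e)
                  ⊆ (act G t s (j+1)).filter (fun x => G.Adj x u.val) := by
                apply Finset.insert_subset
                · rw [Finset.mem_filter]
                  refine ⟨act_mono G t s (Nat.zero_le (j+1)) hv0, ?_⟩
                  rw [huw]; exact hadj
                · exact hsub
              have hc1 := Finset.card_le_card hins
              rw [Finset.card_insert_of_notMem hvnm, Finset.card_map] at hc1
              have ht2u : t2 u = t w - 1 := by rw [ht2]; simp [huw]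
              rw [ht2u] at hu
              have hw1 := ht w
              have hss := hsu u
              have htu : t u.val = t w := by rw [huw]
              omega
            · have hc1 := Finset.card_le_card hsub
              rw [Finset.card_map] at hc1
              have ht2u : t2 u = t u.val := by rw [ht2]; simp [huw]
              rw [ht2u] at hu
              have hss := hsu u
              omega
      refine ⟨s, ?_, J + 1, ?_⟩
      · intro u
        by_cases huv : u = v
        · rw [huv, hsv]; exact htvk
        · rw [hsu ⟨u, huv⟩]; exact hs2k _
      · apply Finset.eq_univ_iff_forall.mpr
        intro x
        by_cases hxv : x = v
        · rw [hxv]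
          exact act_mono G t s (Nat.zero_le (J+1)) hv0
        · exact claim J ⟨x, hxv⟩ (by rw [hJ]; exact Finset.mem_univ _)
    · -- case (b): t v = k+1, T' pervading
      set s : V → ℕ := fun u => if h : u = v then k else s2 ⟨u, h⟩ with hs
      have hsv : s v = k := by rw [hs]; simp
      have hsu : ∀ (u : {u : V // u ≠ v}), s u.val = s2 u := by
        rintro ⟨u, hu⟩
        rw [hs]
        simp [hu]
      have claim : ∀ j, ∀ u : {u : V // u ≠ v}, u ∈ act G' t1 s2 j →
          u.val ∈ act G t s j := by
        intro j
        induction j with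
        | zero =>
          intro u hu
          rw [mem_act_zero] at hu ⊢
          rw [hsu u]
          exact hu
        | succ j ih =>
          intro u hu
          rw [mem_act_succ] at hu ⊢
          rcases hu with hu | hu
          · exact Or.inl (ih u hu)
          · right
            have hfeq : (act G' t1 s2 j).filter (fun x => G'.Adj x u)
                = (act G' t1 s2 j).filter (fun x => G.Adj x.val u.val) := by
              apply Finset.filter_congr
              intro x _
              simp [hG', SimpleGraph.comap_adj]
            have hcard : ∀ inst, (@Finset.filter _ (fun x => G'.Adj x u) inst (act G' t1 s2 j)).card = ((act G' t1 s2 j).filter (fun x => G.Adj x.val u.val)).card :=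
              fun inst => by convert congrArg Finset.card hfeq
            rw [hcard] at hu
            have hsub : ((act G' t1 s2 j).filter (fun x => G.Adj x.val u.val)).map e ⊆
                (act G t s j).filter (fun x => G.Adj x u.val) := by
              intro x hx
              rw [Finset.mem_map] at hx
              obtain ⟨y, hy, hyx⟩ := hx
              rw [Finset.mem_filter] at hy
              rw [Finset.mem_filter]
              have : e y = y.val := rfl
              rw [← hyx, this]
              exact ⟨ih y hy.1, hy.2⟩
            have hc1 := Finset.card_le_card hsub
            rw [Finset.card_map] at hc1
            have hss := hsu u
            have ht1u : t1 u = t u.val := by rw [ht1]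
            omega
      have hwJ : w ∈ act G t s J := by
        have : (⟨w, Ne.symm hvw⟩ : {u : V // u ≠ v}) ∈ act G' t1 s2 J := by
          rw [hJ]; exact Finset.mem_univ _
        exact claim J ⟨w, Ne.symm hvw⟩ this
      refine ⟨s, ?_, J + 1, ?_⟩
      · intro u
        by_cases huv : u = v
        · rw [huv, hsv]
        · rw [hsu ⟨u, huv⟩]; exact hs2k _
      · apply Finset.eq_univ_iff_forall.mpr
        intro x
        by_cases hxv : x = v
        · subst hxv
          rw [mem_act_succ]
          right
          have hwmem : w ∈ (act G t s J).filter (fun y => G.Adj y x) := by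
            rw [Finset.mem_filter]
            exact ⟨hwJ, hwv⟩
          have hpos : 0 < ((act G t s J).filter (fun y => G.Adj y x)).card :=
            Finset.card_pos.mpr ⟨w, hwmem⟩
          omega
        · exact act_le_succ G t s J (claim J ⟨x, hxv⟩ (by rw [hJ]; exact Finset.mem_univ _))
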